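/- Let n ≥ 1, let β, d, d′ be real symmetric positive definite n×n matrices with d′ = β − d⁻¹, and let c be a real number with 0 < c ≤ λ₋(d). Then λ₋(d′) ≤ λ₋(β) − 1/(Tr(d) − (n−1)·c). -/

import Mathlib

open Matrix

/-- The least eigenvalue of a real symmetric (Hermitian) matrix. -/
noncomputable def minEig {n : ℕ} {M : Matrix (Fin n) (Fin n) ℝ}
    (hM : M.IsHermitian) : ℝ :=
  ⨅ i, hM.eigenvalues i

namespace Stmt10Aux

variable {n : ℕ}

/-- Real spectral theorem, stated with a plain real diagonal. -/
lemma spectral_real {M : Matrix (Fin n) (Fin n) ℝ} (hM : M.IsHermitian) :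
    M = (hM.eigenvectorUnitary : Matrix (Fin n) (Fin n) ℝ) * diagonal hM.eigenvalues *
      star (hM.eigenvectorUnitary : Matrix (Fin n) (Fin n) ℝ) := by
  have h := hM.spectral_theorem
  simpa [RCLike.ofReal_real_eq_id, Function.comp] using h

lemma conj_sub_smul (U D : Matrix (Fin n) (Fin n) ℝ) (hU : U * star U = 1) (c : ℝ) :
    U * (D - c • (1 : Matrix (Fin n) (Fin n) ℝ)) * star U
      = U * D * star U - c • (1 : Matrix (Fin n) (Fin n) ℝ) := by
  rw [Matrix.mul_sub, Matrix.sub_mul]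
  congr 1
  rw [Matrix.mul_smul, Matrix.smul_mul, mul_one, hU]

lemma diag_sub_smul (f : Fin n → ℝ) (c : ℝ) :
    diagonal (fun i => f i - c) = diagonal f - c • (1 : Matrix (Fin n) (Fin n) ℝ) := by
  ext i j
  by_cases h : i = j <;> simp [Matrix.diagonal_apply, h, Matrix.one_apply]

/-- If every eigenvalue of a hermitian `M` is at least `c`, then `M - c•1` is PSD. -/
lemma sub_smul_posSemidef {M : Matrix (Fin n) (Fin n) ℝ} (hM : M.IsHermitian) {c : ℝ}
    (h : ∀ i, c ≤ hM.eigenvalues i) :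
    (M - c • (1 : Matrix (Fin n) (Fin n) ℝ)).PosSemidef := by
  have hU : (hM.eigenvectorUnitary : Matrix (Fin n) (Fin n) ℝ) *
      star (hM.eigenvectorUnitary : Matrix (Fin n) (Fin n) ℝ) = 1 :=
    (Matrix.mem_unitaryGroup_iff).mp hM.eigenvectorUnitary.2
  have key : M - c • (1 : Matrix (Fin n) (Fin n) ℝ)
      = (hM.eigenvectorUnitary : Matrix (Fin n) (Fin n) ℝ) *
        diagonal (fun i => hM.eigenvalues i - c) *
        star (hM.eigenvectorUnitary : Matrix (Fin n) (Fin n) ℝ) := by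
    rw [diag_sub_smul, conj_sub_smul _ _ hU, ← spectral_real hM]
  rw [key]
  have hdiag : (diagonal (fun i => hM.eigenvalues i - c) :
      Matrix (Fin n) (Fin n) ℝ).PosSemidef :=
    posSemidef_diagonal_iff.mpr fun i => sub_nonneg.mpr (h i)
  simpa [Matrix.star_eq_conjTranspose] using
    hdiag.mul_mul_conjTranspose_same (hM.eigenvectorUnitary : Matrix (Fin n) (Fin n) ℝ)

/-- Quadratic-form lower bound from PSD of `M - c•1`. -/
lemma quad_lb {M : Matrix (Fin n) (Fin n) ℝ} {c : ℝ}
    (h : (M - c • (1 : Matrix (Fin n) (Fin n) ℝ)).PosSemidef) (x : Fin n → ℝ) :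
    c * dotProduct x x ≤ dotProduct x (M *ᵥ x) := by
  have h2 := h.dotProduct_mulVec_nonneg x
  simp only [star_trivial, Matrix.sub_mulVec, dotProduct_sub, Matrix.smul_mulVec,
    Matrix.one_mulVec, dotProduct_smul, smul_eq_mul, sub_nonneg] at h2
  exact h2

/-- Trace of a hermitian matrix equals the sum of eigenvalues. -/
lemma trace_eq_sum {M : Matrix (Fin n) (Fin n) ℝ} (hM : M.IsHermitian) :
    M.trace = ∑ i, hM.eigenvalues i := by
  have hU : star (hM.eigenvectorUnitary : Matrix (Fin n) (Fin n) ℝ) *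
      (hM.eigenvectorUnitary : Matrix (Fin n) (Fin n) ℝ) = 1 :=
    (Matrix.mem_unitaryGroup_iff').mp hM.eigenvectorUnitary.2
  conv_lhs => rw [spectral_real hM]
  rw [Matrix.trace_mul_cycle, hU, one_mul, trace_diagonal]

lemma conj_mul_conj (U D E : Matrix (Fin n) (Fin n) ℝ) (hU : U * star U = 1)
    (hU' : star U * U = 1) (hDE : D * E = 1) :
    (U * D * star U) * (U * E * star U) = 1 := by
  have h : (U * D * star U) * (U * E * star U)
      = U * (D * ((star U * U) * E)) * star U := by
    simp only [Matrix.mul_assoc]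
  rw [h, hU', one_mul, hDE, mul_one, hU]

lemma inv_spectral {M : Matrix (Fin n) (Fin n) ℝ} (hM : M.PosDef) :
    M⁻¹ = (hM.1.eigenvectorUnitary : Matrix (Fin n) (Fin n) ℝ) *
      diagonal (fun i => (hM.1.eigenvalues i)⁻¹) *
      star (hM.1.eigenvectorUnitary : Matrix (Fin n) (Fin n) ℝ) := by
  apply Matrix.inv_eq_right_inv
  have hU : (hM.1.eigenvectorUnitary : Matrix (Fin n) (Fin n) ℝ) *
      star (hM.1.eigenvectorUnitary : Matrix (Fin n) (Fin n) ℝ) = 1 :=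
    (Matrix.mem_unitaryGroup_iff).mp hM.1.eigenvectorUnitary.2
  have hU' : star (hM.1.eigenvectorUnitary : Matrix (Fin n) (Fin n) ℝ) *
      (hM.1.eigenvectorUnitary : Matrix (Fin n) (Fin n) ℝ) = 1 :=
    (Matrix.mem_unitaryGroup_iff').mp hM.1.eigenvectorUnitary.2
  have hdd : (diagonal hM.1.eigenvalues : Matrix (Fin n) (Fin n) ℝ) *
      diagonal (fun i => (hM.1.eigenvalues i)⁻¹) = 1 := by
    rw [Matrix.diagonal_mul_diagonal]
    have h1 : (fun i => hM.1.eigenvalues i * (hM.1.eigenvalues i)⁻¹) = fun _ => (1:ℝ) := by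
      funext i; exact mul_inv_cancel₀ (ne_of_gt (hM.eigenvalues_pos i))
    rw [h1, Matrix.diagonal_one]
  calc M * ((hM.1.eigenvectorUnitary : Matrix (Fin n) (Fin n) ℝ) *
        diagonal (fun i => (hM.1.eigenvalues i)⁻¹) *
        star (hM.1.eigenvectorUnitary : Matrix (Fin n) (Fin n) ℝ))
      = ((hM.1.eigenvectorUnitary : Matrix (Fin n) (Fin n) ℝ) * diagonal hM.1.eigenvalues *
        star (hM.1.eigenvectorUnitary : Matrix (Fin n) (Fin n) ℝ)) *
        ((hM.1.eigenvectorUnitary : Matrix (Fin n) (Fin n) ℝ) *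
        diagonal (fun i => (hM.1.eigenvalues i)⁻¹) *
        star (hM.1.eigenvectorUnitary : Matrix (Fin n) (Fin n) ℝ)) := by
        rw [← spectral_real hM.1]
    _ = 1 := conj_mul_conj _ _ _ hU hU' hdd

end Stmt10Aux

open Stmt10Aux in
/-- If `β`, `d`, `d′` are real symmetric positive definite `n×n` matrices
(`n ≥ 1`) with `d′ = β − d⁻¹`, and `0 < c ≤ λ₋(d)`, then
`λ₋(d′) ≤ λ₋(β) − 1/(Tr(d) − (n−1)·c)`. -/
theorem stmt10 {n : ℕ} (hn : 1 ≤ n)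
    (β d d' : Matrix (Fin n) (Fin n) ℝ)
    (hβ : β.PosDef) (hd : d.PosDef) (hd' : d'.PosDef)
    (hrec : d' = β - d⁻¹)
    (c : ℝ) (hc : 0 < c) (hcle : c ≤ minEig hd.1) :
    minEig hd'.1 ≤ minEig hβ.1 - 1 / (d.trace - ((n : ℝ) - 1) * c) := by
  haveI : Nonempty (Fin n) := Fin.pos_iff_nonempty.mp hn
  set T : ℝ := d.trace - ((n : ℝ) - 1) * c with hT
  -- every eigenvalue of d is ≥ c
  have hbdd : ∀ (M : Matrix (Fin n) (Fin n) ℝ) (hM : M.IsHermitian) (i : Fin n),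
      minEig hM ≤ hM.eigenvalues i := fun M hM i =>
    ciInf_le (Set.Finite.bddBelow (Set.finite_range _)) i
  have hdc : ∀ i, c ≤ hd.1.eigenvalues i := fun i => hcle.trans (hbdd d hd.1 i)
  -- every eigenvalue of d is ≤ T
  have htr : d.trace = ∑ i, hd.1.eigenvalues i := trace_eq_sum hd.1
  have hlamT : ∀ j, hd.1.eigenvalues j ≤ T := by
    intro j
    have hsum : ((n : ℝ) - 1) * c + hd.1.eigenvalues j ≤ ∑ i, hd.1.eigenvalues i := by
      rw [← Finset.add_sum_erase _ _ (Finset.mem_univ j), add_comm]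
      gcongr
      have hcard : (Finset.univ.erase j).card = n - 1 := by
        rw [Finset.card_erase_of_mem (Finset.mem_univ j), Finset.card_univ, Fintype.card_fin]
      calc ((n : ℝ) - 1) * c = ((Finset.univ.erase j).card : ℝ) * c := by
            rw [hcard, Nat.cast_sub hn, Nat.cast_one]
        _ ≤ ∑ i ∈ Finset.univ.erase j, hd.1.eigenvalues i := by
            rw [← nsmul_eq_mul]
            exact Finset.card_nsmul_le_sum _ _ _ fun i _ => hdc i
    rw [hT, htr]
    linarith
  have hTpos : 0 < T :=
    lt_of_lt_of_le (hc.trans_le (hdc (Classical.arbitrary _))) (hlamT _)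
  -- PSD facts
  have hinv_psd : (d⁻¹ - (1 / T) • (1 : Matrix (Fin n) (Fin n) ℝ)).PosSemidef := by
    have hU : (hd.1.eigenvectorUnitary : Matrix (Fin n) (Fin n) ℝ) *
        star (hd.1.eigenvectorUnitary : Matrix (Fin n) (Fin n) ℝ) = 1 :=
      (Matrix.mem_unitaryGroup_iff).mp hd.1.eigenvectorUnitary.2
    have key : d⁻¹ - (1 / T) • (1 : Matrix (Fin n) (Fin n) ℝ)
        = (hd.1.eigenvectorUnitary : Matrix (Fin n) (Fin n) ℝ) *
          diagonal (fun i => (hd.1.eigenvalues i)⁻¹ - 1 / T) *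
          star (hd.1.eigenvectorUnitary : Matrix (Fin n) (Fin n) ℝ) := by
      rw [diag_sub_smul, conj_sub_smul _ _ hU, ← inv_spectral hd]
    rw [key]
    have hdiag : (diagonal (fun i => (hd.1.eigenvalues i)⁻¹ - 1 / T) :
        Matrix (Fin n) (Fin n) ℝ).PosSemidef := by
      refine posSemidef_diagonal_iff.mpr fun i => sub_nonneg.mpr ?_
      rw [one_div]
      exact inv_anti₀ (hc.trans_le (hdc i)) (hlamT i)
    simpa [Matrix.star_eq_conjTranspose] using
      hdiag.mul_mul_conjTranspose_same (hd.1.eigenvectorUnitary : Matrix (Fin n) (Fin n) ℝ)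
  have hd'_psd : (d' - minEig hd'.1 • (1 : Matrix (Fin n) (Fin n) ℝ)).PosSemidef :=
    sub_smul_posSemidef hd'.1 fun i => hbdd d' hd'.1 i
  -- eigenvector of β with least eigenvalue
  obtain ⟨i0, hi0⟩ := exists_eq_ciInf_of_finite (f := hβ.1.eigenvalues)
  set v : Fin n → ℝ := ⇑(hβ.1.eigenvectorBasis i0) with hv
  have hvne : v ≠ 0 := by
    have := hβ.1.eigenvectorBasis.orthonormal.ne_zero i0
    intro h
    apply this
    ext j
    exact congrFun h j
  have hs : 0 < dotProduct v v := by
    have hnn : 0 ≤ dotProduct v v := Finset.sum_nonneg fun i _ => mul_self_nonneg _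
    rcases lt_or_eq_of_le hnn with h | h
    · exact h
    · exact absurd (dotProduct_self_eq_zero.mp h.symm) hvne
  have hβv : dotProduct v (β *ᵥ v) = minEig hβ.1 * dotProduct v v := by
    rw [hβ.1.mulVec_eigenvectorBasis i0]
    rw [dotProduct_smul]
    rw [hi0]
    rfl
  have hsplit : β = d' + d⁻¹ := by rw [hrec]; abel
  have hβv' : dotProduct v (β *ᵥ v)
      = dotProduct v (d' *ᵥ v) + dotProduct v (d⁻¹ *ᵥ v) := by
    rw [hsplit, Matrix.add_mulVec, dotProduct_add]
  have h1 : minEig hd'.1 * dotProduct v v ≤ dotProduct v (d' *ᵥ v) := quad_lb hd'_psd v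
  have h2 : (1 / T) * dotProduct v v ≤ dotProduct v (d⁻¹ *ᵥ v) := quad_lb hinv_psd v
  have hmain : minEig hd'.1 * dotProduct v v + (1 / T) * dotProduct v v
      ≤ minEig hβ.1 * dotProduct v v := by
    rw [← hβv, hβv']; linarith
  nlinarith [hmain, hs]
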